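/- Let L, H, d > 0, V > 0, σ₂ > 0, and let σ₁ : [-L,L] → ℝ be continuously differentiable and positive. Define h₂(x,z,w) := V (σ₂ d + σ₁(x)(H + z)) / (σ₂ d + σ₁(x)(H + w)) for (x,z,w) ∈ [-L,L] × [-H,∞) × [-H,∞). Then there exist constants m₁, m₂, m₃ > 0 such that for all x ∈ [-L,L] and all -H ≤ z ≤ w with w > -H: |∂_x h₂(x,z,w)| + |∂_z h₂(x,z,w)| ≤ √((m₁ + m₂ w²)/(H + w)) and |∂_w h₂(x,z,w)| ≤ √(m₃/(H + w)). -/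

import Mathlib

open Set


private lemma stmt12_aux_sq (C H w : ℝ) : C ^ 2 * (H + w) ≤ C ^ 2 * (H + 1) + C ^ 2 * w ^ 2 := by
  nlinarith [mul_nonneg (sq_nonneg C) (sq_nonneg (2 * w - 1)), sq_nonneg C]

private lemma stmt12_aux_b1 (V N s A M D : ℝ) (hV : 0 < V) (hN : 0 < N) (hs : 0 < s)
    (hA : 0 < A) (hsM : s ≤ M) (hND : N ≤ D) (hAD : A ≤ D) :
    V * N * s * A ≤ V * M * D ^ 2 := by
  have hD : 0 < D := lt_of_lt_of_le hA hAD
  have h1 : s * A ≤ M * D := mul_le_mul hsM hAD hA.le (hs.le.trans hsM)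
  have h2 : N * (s * A) ≤ D * (M * D) :=
    mul_le_mul hND h1 (by positivity) hD.le
  nlinarith [mul_le_mul_of_nonneg_left h2 hV.le]

private lemma stmt12_aux_b2 (V N s A H w D : ℝ) (hV : 0 < V) (hN : 0 < N) (hs : 0 < s)
    (hHw : 0 < H + w) (hND : N ≤ D) (hDs : s * (H + w) ≤ D) :
    V * N * s * (H + w) ≤ V * D ^ 2 := by
  have hD : 0 < D := lt_of_lt_of_le hN hND
  have h2 : N * (s * (H + w)) ≤ D * D := mul_le_mul hND hDs (by positivity) hD.le
  nlinarith [mul_le_mul_of_nonneg_left h2 hV.le]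

/-- Example 2.1: the explicit boundary-data function `h₂` on the region between the
layer and the elastic plate satisfies the weighted gradient bounds (2.3f): there are
`m₁, m₂, m₃ > 0` with `|∂ₓh₂| + |∂_zh₂| ≤ √((m₁ + m₂ w²)/(H+w))` and
`|∂_wh₂| ≤ √(m₃/(H+w))` for `-H ≤ z ≤ w`, `w > -H`. -/
theorem stmt12 (L H d V σ₂ : ℝ)
    (hL : 0 < L) (hH : 0 < H) (hd : 0 < d) (hV : 0 < V) (hσ₂ : 0 < σ₂)
    (σ₁ : ℝ → ℝ)
    (hσ₁ : ContDiffOn ℝ 1 σ₁ (Icc (-L) L))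
    (hσ₁pos : ∀ x ∈ Icc (-L) L, 0 < σ₁ x)
    (h₂ : ℝ → ℝ → ℝ → ℝ)
    (hh₂ : ∀ x z w : ℝ,
      h₂ x z w = V * (σ₂ * d + σ₁ x * (H + z)) / (σ₂ * d + σ₁ x * (H + w))) :
    ∃ m₁ > 0, ∃ m₂ > 0, ∃ m₃ > 0,
      ∀ x ∈ Icc (-L) L, ∀ w : ℝ, -H < w → ∀ z ∈ Icc (-H) w,
        |derivWithin (fun x' => h₂ x' z w) (Icc (-L) L) x| +
            |deriv (fun z' => h₂ x z' w) z| ≤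
          Real.sqrt ((m₁ + m₂ * w ^ 2) / (H + w)) ∧
        |deriv (fun w' => h₂ x z w') w| ≤ Real.sqrt (m₃ / (H + w)) := by
  have hLL' : (-L : ℝ) < L := by linarith
  have hcomp : IsCompact (Icc (-L) L) := isCompact_Icc
  have hne : (Icc (-L) L).Nonempty := nonempty_Icc.mpr hLL'.le
  have hσc : ContinuousOn σ₁ (Icc (-L) L) := hσ₁.continuousOn
  obtain ⟨x₀, hx₀, hmin⟩ := hcomp.exists_isMinOn hne hσc
  obtain ⟨x₁, hx₁, hmax⟩ := hcomp.exists_isMaxOn hne hσc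
  set m : ℝ := σ₁ x₀ with hm_def
  set M : ℝ := σ₁ x₁ with hM_def
  have hm : 0 < m := hσ₁pos _ hx₀
  have hM : 0 < M := hσ₁pos _ hx₁
  have huniq : UniqueDiffOn ℝ (Icc (-L) L) := uniqueDiffOn_Icc hLL'
  have hdc : ContinuousOn (derivWithin σ₁ (Icc (-L) L)) (Icc (-L) L) :=
    hσ₁.continuousOn_derivWithin huniq le_rfl
  obtain ⟨B, hB⟩ := hcomp.exists_bound_of_continuousOn hdc
  have hB0 : 0 ≤ B := le_trans (norm_nonneg _) (hB x₀ hx₀)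
  set A : ℝ := σ₂ * d with hA_def
  have hA : 0 < A := mul_pos hσ₂ hd
  set Cz : ℝ := V * M / A with hCz_def
  have hCz : 0 < Cz := div_pos (mul_pos hV hM) hA
  set Cx : ℝ := V * B / m with hCx_def
  have hCx : 0 ≤ Cx := by positivity
  set C : ℝ := Cx + Cz with hC_def
  have hC : 0 < C := add_pos_of_nonneg_of_pos hCx hCz
  refine ⟨C ^ 2 * (H + 1), by positivity, C ^ 2, by positivity, Cz * V,
    mul_pos hCz hV, ?_⟩
  intro x hx w hw z hz
  obtain ⟨hz1, hz2⟩ := hz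
  have hs : 0 < σ₁ x := hσ₁pos x hx
  have hsm : m ≤ σ₁ x := hmin hx
  have hsM : σ₁ x ≤ M := hmax hx
  have hHw : 0 < H + w := by linarith
  have hHz : 0 ≤ H + z := by linarith
  have hzw : H + z ≤ H + w := by linarith
  set s : ℝ := σ₁ x with hs_def
  set D : ℝ := A + s * (H + w) with hD_def
  set N : ℝ := A + s * (H + z) with hN_def
  have hD : 0 < D := add_pos hA (mul_pos hs hHw)
  have hN : 0 < N := add_pos_of_pos_of_nonneg hA (mul_nonneg hs.le hHz)
  have hND : N ≤ D := by
    rw [hN_def, hD_def]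
    exact add_le_add_right (mul_le_mul_of_nonneg_left hzw hs.le) A
  have hDs : s * (H + w) ≤ D := by rw [hD_def]; linarith
  have hAD : A ≤ D := by nlinarith [mul_pos hs hHw]
  -- x-derivative
  have hfx : (fun x' => h₂ x' z w)
      = fun x' => V * (A + σ₁ x' * (H + z)) / (A + σ₁ x' * (H + w)) := by
    funext x'; rw [hh₂]
  set s' : ℝ := derivWithin σ₁ (Icc (-L) L) x with hs'_def
  have hs'B : |s'| ≤ B := hB x hx
  have hsd : HasDerivWithinAt σ₁ s' (Icc (-L) L) x :=
    ((hσ₁.differentiableOn one_ne_zero) x hx).hasDerivWithinAt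
  have hnum : HasDerivWithinAt (fun x' => V * (A + σ₁ x' * (H + z)))
      (V * (s' * (H + z))) (Icc (-L) L) x :=
    ((hsd.mul_const (H + z)).const_add A).const_mul V
  have hden : HasDerivWithinAt (fun x' => A + σ₁ x' * (H + w))
      (s' * (H + w)) (Icc (-L) L) x :=
    (hsd.mul_const (H + w)).const_add A
  have hdiv := hnum.div hden (ne_of_gt hD)
  have hdx : derivWithin (fun x' => h₂ x' z w) (Icc (-L) L) x =
      (V * (s' * (H + z)) * D - V * N * (s' * (H + w))) / D ^ 2 := by
    rw [hfx]; exact hdiv.derivWithin (huniq x hx)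
  have hdx_eq : (V * (s' * (H + z)) * D - V * N * (s' * (H + w))) / D ^ 2
      = V * s' * A * (z - w) / D ^ 2 := by
    rw [hD_def, hN_def]; ring
  have hdx_bound : |derivWithin (fun x' => h₂ x' z w) (Icc (-L) L) x| ≤ Cx := by
    rw [hdx, hdx_eq, abs_div, abs_of_pos (pow_pos hD 2)]
    have h1 : |V * s' * A * (z - w)| ≤ V * B * A * (H + w) := by
      have hzw' : |z - w| ≤ H + w := by
        rw [abs_sub_comm, abs_of_nonneg (by linarith)]; linarith
      calc |V * s' * A * (z - w)| = V * |s'| * A * |z - w| := by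
            rw [abs_mul, abs_mul, abs_mul, abs_of_pos hV, abs_of_pos hA]
        _ ≤ V * B * A * (H + w) := by gcongr
    have h2 : A * (m * (H + w)) ≤ D ^ 2 := by
      have hms : m * (H + w) ≤ D :=
        le_trans (mul_le_mul_of_nonneg_right hsm hHw.le) hDs
      calc A * (m * (H + w)) ≤ D * D := mul_le_mul hAD hms (by positivity) hD.le
        _ = D ^ 2 := (sq D).symm
    have h3 : |V * s' * A * (z - w)| / D ^ 2 ≤ (V * B * A * (H + w)) / (A * (m * (H + w))) :=
      div_le_div₀ (by positivity) h1 (by positivity) h2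
    have h4 : (V * B * A * (H + w)) / (A * (m * (H + w))) = Cx := by
      rw [hCx_def]; field_simp
    rw [h4] at h3; exact h3
  -- z-derivative
  have hfz : (fun z' => h₂ x z' w) = fun z' => V * (A + s * (H + z')) / D := by
    funext z'; rw [hh₂]
  have hdz : deriv (fun z' => h₂ x z' w) z = V * (s * 1) / D := by
    rw [hfz]
    exact (((((hasDerivAt_id z).const_add H).const_mul s).const_add A).const_mul
      V).div_const D |>.deriv
  have hdz_bound : |deriv (fun z' => h₂ x z' w) z| ≤ Cz := by
    rw [hdz, mul_one, abs_div, abs_of_pos hD, abs_of_pos (mul_pos hV hs), hCz_def]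
    exact div_le_div₀ (by positivity) (mul_le_mul_of_nonneg_left hsM hV.le) hA hAD
  -- w-derivative
  have hfw : (fun w' => h₂ x z w') = fun w' => V * N / (A + s * (H + w')) := by
    funext w'; rw [hh₂]
  have hdenw : HasDerivAt (fun w' => A + s * (H + w')) (s * 1) w :=
    (((hasDerivAt_id w).const_add H).const_mul s).const_add A
  have hdw : deriv (fun w' => h₂ x z w') w = (0 * D - V * N * (s * 1)) / D ^ 2 := by
    rw [hfw]
    exact ((hasDerivAt_const w (V * N)).div hdenw (ne_of_gt hD)).deriv
  have hdw_abs : |deriv (fun w' => h₂ x z w') w| = V * N * s / D ^ 2 := by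
    rw [hdw]
    have : (0 * D - V * N * (s * 1)) / D ^ 2 = -(V * N * s / D ^ 2) := by ring
    rw [this, abs_neg, abs_of_nonneg (by positivity)]
  constructor
  · have hsum : |derivWithin (fun x' => h₂ x' z w) (Icc (-L) L) x| +
        |deriv (fun z' => h₂ x z' w) z| ≤ C := by
      rw [hC_def]; exact add_le_add hdx_bound hdz_bound
    refine le_trans hsum (Real.le_sqrt_of_sq_le ?_)
    rw [le_div_iff₀ hHw]
    exact stmt12_aux_sq C H w
  · refine Real.le_sqrt_of_sq_le ?_
    rw [hdw_abs]
    have hb1 : V * N * s / D ^ 2 ≤ Cz := by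
      rw [hCz_def, div_le_div_iff₀ (by positivity) hA]
      exact stmt12_aux_b1 V N s A M D hV hN hs hA hsM hND hAD
    have hb2 : V * N * s / D ^ 2 ≤ V / (H + w) := by
      rw [div_le_div_iff₀ (by positivity) hHw]
      exact stmt12_aux_b2 V N s A H w D hV hN hs hHw hND hDs
    have hnn : 0 ≤ V * N * s / D ^ 2 := by positivity
    calc (V * N * s / D ^ 2) ^ 2 = (V * N * s / D ^ 2) * (V * N * s / D ^ 2) := sq _
      _ ≤ Cz * (V / (H + w)) := mul_le_mul hb1 hb2 hnn hCz.le
      _ = Cz * V / (H + w) := by ring
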